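/- Suppose the sequence (p_j)_{j≥1} does not converge to 1. Then for each of the Banach spaces Ω ∈ { c_0, l^α for 1 ≤ α < ∞ }, the point spectrum of the transition operator S acting on Ω is empty: there is no λ ∈ ℂ and nonzero v ∈ Ω with S v = λ v. -/

import Mathlib

open Filter Finset
open scoped ENNReal Topology ZeroAtInfty

noncomputable section

namespace AMFC

/-- `q d j = d 0 * d 1 * ... * d j`. -/
def q (d : ℕ → ℕ) (j : ℕ) : ℕ := ∏ i ∈ Finset.range (j + 1), d i

/-- For `j ≥ 1`, `digit d n j = ⌊n / q_{j-1}⌋ mod d_j` is the `j`-th digit of `n`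
in the Cantor system of numeration. -/
def digit (d : ℕ → ℕ) (n j : ℕ) : ℕ := (n / q d (j - 1)) % d j

/-- The counter `ζ_n = min { j ≥ 1 : a_j(n) ≠ d_j - 1 }`. -/
def zeta (d : ℕ → ℕ) (n : ℕ) : ℕ := sInf {j | 1 ≤ j ∧ digit d n j ≠ d j - 1}

open scoped Classical in
/-- The transition probabilities of the stochastic adding machine. -/
def s (d : ℕ → ℕ) (p : ℕ → ℝ) (n m : ℕ) : ℝ :=
  if m = n + 1 then ∏ j ∈ Finset.Icc 1 (zeta d n), p j
  else if m = n then 1 - p 1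
  else if h : ∃ r, 1 ≤ r ∧ r + 1 ≤ zeta d n ∧
      n = m + ∑ j ∈ Finset.Icc 1 r, (d j - 1) * q d (j - 1)
    then (1 - p (h.choose + 1)) * ∏ j ∈ Finset.Icc 1 h.choose, p j
  else 0

/-- `f j (z) = ((z - (1 - p j)) / p j) ^ (d j)`. -/
def f (d : ℕ → ℕ) (p : ℕ → ℝ) (j : ℕ) (z : ℂ) : ℂ :=
  ((z - (1 - (p j : ℂ))) / (p j : ℂ)) ^ d j

/-- `ftil j = f j ∘ ... ∘ f 1`, with `ftil 0 = id`. -/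
def ftil (d : ℕ → ℕ) (p : ℕ → ℝ) : ℕ → ℂ → ℂ
  | 0 => id
  | j + 1 => f d p (j + 1) ∘ ftil d p j

/-- The fibered filled Julia set `E = {z : limsup_j |ftil j z| < ∞}`. -/
def E (d : ℕ → ℕ) (p : ℕ → ℝ) : Set ℂ :=
  {z | Filter.limsup (fun j => (‖ftil d p j z‖₊ : ℝ≥0∞)) Filter.atTop < ⊤}

/-- `ι_λ(r) = (ftil (r-1) λ - (1 - p r)) / p r` for `r ≥ 1`. -/
def iota (d : ℕ → ℕ) (p : ℕ → ℝ) (lam : ℂ) (r : ℕ) : ℂ :=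
  (ftil d p (r - 1) lam - (1 - (p r : ℂ))) / (p r : ℂ)

/-- `v_λ(n) = ∏_{r ≥ 1} ι_λ(r) ^ a_r(n)`, a finite product. -/
def vlam (d : ℕ → ℕ) (p : ℕ → ℝ) (lam : ℂ) (n : ℕ) : ℂ :=
  ∏ᶠ r : ℕ, iota d p lam (r + 1) ^ digit d n (r + 1)


/-! ### Auxiliary lemmas -/

section basic
variable {d : ℕ → ℕ} (hd0 : d 0 = 1) (hd : ∀ j, 1 ≤ j → 2 ≤ d j)
include hd0 hd

lemma q_zero : q d 0 = 1 := by simp [q, hd0]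

omit hd0 hd in
lemma q_succ (j : ℕ) : q d (j + 1) = q d j * d (j + 1) := Finset.prod_range_succ d (j + 1)

lemma d_pos (j : ℕ) : 0 < d j := by
  rcases Nat.eq_zero_or_pos j with rfl | hj
  · omega
  · have := hd j hj; omega

lemma q_pos (j : ℕ) : 0 < q d j :=
  Finset.prod_pos fun i _ => d_pos hd0 hd i

lemma q_strictMono : StrictMono (q d) := by
  apply strictMono_nat_of_lt_succ
  intro j
  rw [q_succ]
  have h2 : 2 ≤ d (j + 1) := hd _ (by omega)
  have := q_pos hd0 hd j
  nlinarith

lemma le_q (j : ℕ) : j + 1 ≤ q d j := by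
  induction j with
  | zero => simp [q_zero hd0 hd]
  | succ k ih =>
    have h2 : q d k < q d (k + 1) := (q_strictMono hd0 hd) (Nat.lt_succ_self k)
    omega

lemma two_le_q {r : ℕ} (hr : 1 ≤ r) : 2 ≤ q d r := by
  have := le_q hd0 hd r; omega

omit hd0 hd in
lemma q_factor {i j : ℕ} (h : i ≤ j) :
    q d j = q d i * ∏ k ∈ Finset.Ico (i + 1) (j + 1), d k := by
  rw [q, q, ← Finset.prod_range_mul_prod_Ico d (Nat.succ_le_succ h)]

omit hd0 hd in
lemma q_dvd {i j : ℕ} (h : i ≤ j) : q d i ∣ q d j :=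
  ⟨_, q_factor h⟩

lemma d_dvd_q_div {jm1 i : ℕ} (hij : jm1 + 1 ≤ i) :
    d (jm1 + 1) ∣ ∏ k ∈ Finset.Ico (jm1 + 1) (i + 1), d k :=
  Finset.dvd_prod_of_mem d (by simp; omega)

end basic

section digits
variable {d : ℕ → ℕ} (hd0 : d 0 = 1) (hd : ∀ j, 1 ≤ j → 2 ≤ d j)
include hd0 hd

lemma zeta_mem (n : ℕ) :
    zeta d n ∈ {j | 1 ≤ j ∧ digit d n j ≠ d j - 1} := by
  apply Nat.sInf_mem
  refine ⟨n + 1, by simp, ?_⟩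
  have hq : n < q d n := by have := le_q hd0 hd n; omega
  have : digit d n (n + 1) = 0 := by
    simp [digit, Nat.div_eq_of_lt hq]
  rw [this]
  have := hd (n + 1) (by omega); omega

lemma zeta_pos (n : ℕ) : 1 ≤ zeta d n := (zeta_mem hd0 hd n).1

lemma digit_zeta_ne (n : ℕ) : digit d n (zeta d n) ≠ d (zeta d n) - 1 :=
  (zeta_mem hd0 hd n).2

omit hd0 hd in
lemma digit_of_lt_zeta {n j : ℕ} (h1 : 1 ≤ j) (h : j < zeta d n) :
    digit d n j = d j - 1 := by
  by_contra hne
  have : zeta d n ≤ j := Nat.sInf_le (show j ∈ {j | 1 ≤ j ∧ digit d n j ≠ d j - 1} from ⟨h1, hne⟩)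
  omega

omit hd0 hd in
/-- decomposition of mod for a product -/
lemma mod_mul_decomp (n a b : ℕ) : n % (a * b) = n % a + a * ((n / a) % b) := by
  rcases Nat.eq_zero_or_pos a with rfl | ha
  · simp
  conv_lhs => rw [← Nat.div_add_mod (n % (a * b)) a]
  rw [Nat.mod_mul_right_div_self, Nat.mod_mod_of_dvd _ ⟨b, rfl⟩]
  ring

/-- if all digits up to k are full then n % q_k = q_k - 1 -/
lemma mod_full {n k : ℕ} (h : ∀ j, 1 ≤ j → j ≤ k → digit d n j = d j - 1) :
    n % q d k = q d k - 1 := by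
  induction k with
  | zero => simp [q_zero hd0 hd]; omega
  | succ k ih =>
    have hk := ih (fun j h1 h2 => h j h1 (by omega))
    have hdig : digit d n (k + 1) = d (k + 1) - 1 := h (k + 1) (by omega) le_rfl
    rw [q_succ, mod_mul_decomp, hk]
    have : (n / q d k) % d (k + 1) = d (k + 1) - 1 := by
      simpa [digit] using hdig
    rw [this]
    have h2 : 2 ≤ d (k + 1) := hd _ (by omega)
    have hq := q_pos hd0 hd k
    have : q d k * (d (k + 1) - 1) = q d k * d (k + 1) - q d k := by
      rw [Nat.mul_sub_one]
    have hle : q d k ≤ q d k * d (k + 1) := Nat.le_mul_of_pos_right _ (by omega)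
    omega

lemma mod_of_lt_zeta {n k : ℕ} (h : k < zeta d n) : n % q d k = q d k - 1 :=
  mod_full hd0 hd fun j h1 h2 => digit_of_lt_zeta h1 (by omega)


lemma digit_lt (n j : ℕ) : digit d n j < d j :=
  Nat.mod_lt _ (d_pos hd0 hd j)

lemma succ_factor {n k : ℕ} (hmod : n % q d k = q d k - 1) :
    n + 1 = q d k * (n / q d k + 1) := by
  have h1 := Nat.div_add_mod n (q d k)
  have hq := q_pos hd0 hd k
  rw [Nat.mul_succ]
  omega

lemma sub_factor {n k : ℕ} (hmod : n % q d k = q d k - 1) :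
    n - (q d k - 1) = q d k * (n / q d k) := by
  have h1 := Nat.div_add_mod n (q d k)
  have hq := q_pos hd0 hd k
  omega

lemma digit_mul_low {k j N : ℕ} (h1 : 1 ≤ j) (hj : j ≤ k) :
    digit d (q d k * N) j = 0 := by
  have hf : q d k = q d (j - 1) * ∏ i ∈ Finset.Ico j (k + 1), d i := by
    have := q_factor (d := d) (show j - 1 ≤ k by omega)
    rwa [show j - 1 + 1 = j by omega] at this
  have hdvd : d j ∣ ∏ i ∈ Finset.Ico j (k + 1), d i :=
    Finset.dvd_prod_of_mem d (by simp; omega)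
  have hq := q_pos hd0 hd (j - 1)
  unfold digit
  rw [hf, mul_assoc, Nat.mul_div_cancel_left _ hq]
  exact Nat.mod_eq_zero_of_dvd (hdvd.mul_right N)

lemma digit_succ_lt {n j : ℕ} (h1 : 1 ≤ j) (hj : j < zeta d n) :
    digit d (n + 1) j = 0 := by
  set m := zeta d n with hm
  have hm1 : 1 ≤ m := zeta_pos hd0 hd n
  have hmod := mod_of_lt_zeta hd0 hd (show m - 1 < zeta d n by omega)
  rw [succ_factor hd0 hd hmod]
  exact digit_mul_low hd0 hd h1 (by omega)

lemma digit_succ_key {n : ℕ} :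
    (n / q d (zeta d n - 1) + 1) % d (zeta d n) = digit d n (zeta d n) + 1 := by
  set m := zeta d n with hm
  have hm1 : 1 ≤ m := zeta_pos hd0 hd n
  have h2 : 2 ≤ d m := hd m hm1
  have hlt : digit d n m < d m := digit_lt hd0 hd n m
  have hne := digit_zeta_ne hd0 hd n
  rw [← hm] at hne
  have hNd : (n / q d (m - 1)) % d m = digit d n m := rfl
  have h1m : (1 : ℕ) % d m = 1 := Nat.mod_eq_of_lt (by omega)
  rw [Nat.add_mod, hNd, h1m, Nat.mod_eq_of_lt (by omega)]

lemma digit_succ_self {n : ℕ} :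
    digit d (n + 1) (zeta d n) = digit d n (zeta d n) + 1 := by
  set m := zeta d n with hm
  have hm1 : 1 ≤ m := zeta_pos hd0 hd n
  have hmod := mod_of_lt_zeta hd0 hd (show m - 1 < zeta d n by omega)
  have hq := q_pos hd0 hd (m - 1)
  show (n + 1) / q d (m - 1) % d m = _
  rw [succ_factor hd0 hd hmod, Nat.mul_div_cancel_left _ hq]
  exact digit_succ_key hd0 hd

lemma digit_succ_gt {n j : ℕ} (hj : zeta d n < j) :
    digit d (n + 1) j = digit d n j := by
  set m := zeta d n with hm
  have hm1 : 1 ≤ m := zeta_pos hd0 hd n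
  have hmod := mod_of_lt_zeta hd0 hd (show m - 1 < zeta d n by omega)
  have hq : q d (j - 1) = q d (m - 1) * ∏ i ∈ Finset.Ico m j, d i := by
    have := q_factor (d := d) (show m - 1 ≤ j - 1 by omega)
    rwa [show m - 1 + 1 = m by omega, show j - 1 + 1 = j by omega] at this
  set C := ∏ i ∈ Finset.Ico m j, d i with hC
  have hdC : d m ∣ C := Finset.dvd_prod_of_mem d (by simp; omega)
  have hqpos := q_pos hd0 hd (m - 1)
  show (n + 1) / q d (j - 1) % d j = n / q d (j - 1) % d j
  rw [succ_factor hd0 hd hmod, hq, Nat.mul_div_mul_left _ _ hqpos,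
    ← Nat.div_div_eq_div_mul]
  congr 1
  rw [Nat.succ_div, if_neg, add_zero]
  intro hdvd
  have hdm : d m ∣ n / q d (m - 1) + 1 := dvd_trans hdC hdvd
  have h0 : (n / q d (m - 1) + 1) % d m = 0 :=
    Nat.mod_eq_zero_of_dvd hdm
  rw [digit_succ_key hd0 hd] at h0
  omega

lemma digit_sub_le {n r j : ℕ} (h1 : 1 ≤ j) (hj : j ≤ r) (hr : r < zeta d n) :
    digit d (n - (q d r - 1)) j = 0 := by
  rw [sub_factor hd0 hd (mod_of_lt_zeta hd0 hd hr)]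
  exact digit_mul_low hd0 hd h1 hj

lemma digit_sub_gt {n r j : ℕ} (hj : r < j) (hr : r < zeta d n) :
    digit d (n - (q d r - 1)) j = digit d n j := by
  have hq : q d (j - 1) = q d r * ∏ i ∈ Finset.Ico (r + 1) j, d i := by
    have := q_factor (d := d) (show r ≤ j - 1 by omega)
    rwa [show j - 1 + 1 = j by omega] at this
  have hqpos := q_pos hd0 hd r
  show (n - (q d r - 1)) / q d (j - 1) % d j = n / q d (j - 1) % d j
  rw [sub_factor hd0 hd (mod_of_lt_zeta hd0 hd hr), hq,
    Nat.mul_div_mul_left _ _ hqpos, ← Nat.div_div_eq_div_mul]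

lemma digit_zero (j : ℕ) : digit d 0 j = 0 := by
  simp [digit]

lemma digit_q_self (r : ℕ) : digit d (q d r) (r + 1) = 1 := by
  have h2 : 2 ≤ d (r + 1) := hd _ (by omega)
  show q d r / q d r % d (r + 1) = 1
  rw [Nat.div_self (q_pos hd0 hd r), Nat.mod_eq_of_lt (by omega)]

lemma digit_q_low {r j : ℕ} (h1 : 1 ≤ j) (hj : j ≤ r) : digit d (q d r) j = 0 := by
  have := digit_mul_low hd0 hd (N := 1) h1 hj
  rwa [mul_one] at this

lemma digit_q_high {r j : ℕ} (hj : r + 1 < j) : digit d (q d r) j = 0 := by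
  have hlt : q d r < q d (j - 1) := q_strictMono hd0 hd (by omega)
  show q d r / q d (j - 1) % d j = 0
  rw [Nat.div_eq_of_lt hlt, Nat.zero_mod]

lemma digit_high {n j : ℕ} (hn : n < q d (j - 1)) : digit d n j = 0 := by
  show n / q d (j - 1) % d j = 0
  rw [Nat.div_eq_of_lt hn, Nat.zero_mod]


end digits

section cplx
variable {d : ℕ → ℕ} {p : ℕ → ℝ} {lam : ℂ}
variable (hd0 : d 0 = 1) (hd : ∀ j, 1 ≤ j → 2 ≤ d j)
variable (hp : ∀ j, 1 ≤ j → p j ∈ Set.Ioc (0 : ℝ) 1)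

include hp in
lemma pc_ne {r : ℕ} (hr : 1 ≤ r) : (p r : ℂ) ≠ 0 :=
  Complex.ofReal_ne_zero.mpr (hp r hr).1.ne'

lemma ftil_succ (k : ℕ) :
    ftil d p (k + 1) lam = iota d p lam (k + 1) ^ d (k + 1) := rfl

include hp in
lemma iota_mul {r : ℕ} (hr : 1 ≤ r) :
    (p r : ℂ) * iota d p lam r = ftil d p (r - 1) lam - (1 - (p r : ℂ)) := by
  rw [iota, mul_comm, div_mul_cancel₀ _ (pc_ne hp hr)]

include hd hp in
lemma star (k : ℕ) :
    (∏ j ∈ Finset.Icc 1 (k + 1), (p j : ℂ)) * iota d p lam (k + 1)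
      + ∑ r ∈ Finset.range (k + 1), (1 - (p (r + 1) : ℂ)) * (∏ j ∈ Finset.Icc 1 r, (p j : ℂ))
          * ∏ j ∈ Finset.Ioc r k, iota d p lam j ^ (d j - 1)
    = lam * ∏ j ∈ Finset.Ioc 0 k, iota d p lam j ^ (d j - 1) := by
  induction k with
  | zero =>
    rw [Finset.sum_range_one, Finset.Ioc_self, Finset.prod_empty, Finset.Icc_self,
      Finset.prod_singleton, mul_one, mul_one]
    have h10 : Finset.Icc 1 0 = (∅ : Finset ℕ) := by simp
    rw [h10, Finset.prod_empty, mul_one]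
    have hι : iota d p lam 1 = (lam - (1 - (p 1 : ℂ))) / (p 1 : ℂ) := rfl
    have hne := pc_ne hp (le_refl 1)
    rw [hι]
    field_simp
    ring
  | succ k ih =>
    have hι := iota_mul (d := d) (lam := lam) hp (show 1 ≤ k + 2 by omega)
    have hkey : (p (k + 2) : ℂ) * iota d p lam (k + 2)
        = iota d p lam (k + 1) ^ d (k + 1) - (1 - (p (k + 2) : ℂ)) := by
      rw [hι, show k + 2 - 1 = k + 1 from rfl, ftil_succ]
    have hpow : iota d p lam (k + 1) ^ d (k + 1)
        = iota d p lam (k + 1) ^ (d (k + 1) - 1) * iota d p lam (k + 1) := by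
      rw [← pow_succ]
      congr 1
      have := hd (k + 1) (by omega); omega
    have hsum : ∑ r ∈ Finset.range (k + 1), (1 - (p (r + 1) : ℂ)) * (∏ j ∈ Finset.Icc 1 r, (p j : ℂ))
          * ∏ j ∈ Finset.Ioc r (k + 1), iota d p lam j ^ (d j - 1)
        = (∑ r ∈ Finset.range (k + 1), (1 - (p (r + 1) : ℂ)) * (∏ j ∈ Finset.Icc 1 r, (p j : ℂ))
          * ∏ j ∈ Finset.Ioc r k, iota d p lam j ^ (d j - 1))
            * iota d p lam (k + 1) ^ (d (k + 1) - 1) := by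
      rw [Finset.sum_mul]
      refine Finset.sum_congr rfl fun r hr => ?_
      rw [Finset.prod_Ioc_succ_top (Nat.lt_succ_iff.mp (Finset.mem_range.mp hr))]
      ring
    rw [Finset.sum_range_succ, Finset.Ioc_self, Finset.prod_empty, mul_one, hsum,
      Finset.prod_Icc_succ_top (show 1 ≤ k + 2 by omega),
      Finset.prod_Ioc_succ_top (Nat.zero_le k)]
    linear_combination ih * (iota d p lam (k + 1) ^ (d (k + 1) - 1))
      + hkey * (∏ j ∈ Finset.Icc 1 (k + 1), (p j : ℂ))
      + hpow * (∏ j ∈ Finset.Icc 1 (k + 1), (p j : ℂ))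

end cplx

lemma prod_Ioc_split_top {M : Type*} [CommMonoid M] (g : ℕ → M) {a b : ℕ} (h : a < b) :
    ∏ j ∈ Finset.Ioc a b, g j = (∏ j ∈ Finset.Ioc a (b - 1), g j) * g b := by
  obtain ⟨c, rfl⟩ : ∃ c, b = c + 1 := ⟨b - 1, by omega⟩
  rw [Finset.prod_Ioc_succ_top (by omega), Nat.add_sub_cancel]

section vlam_sec
variable {d : ℕ → ℕ} {p : ℕ → ℝ} {lam : ℂ}
variable (hd0 : d 0 = 1) (hd : ∀ j, 1 ≤ j → 2 ≤ d j)
variable (hp : ∀ j, 1 ≤ j → p j ∈ Set.Ioc (0 : ℝ) 1)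

include hd0 hd in
lemma vlam_eq {n K : ℕ} (hK : n < q d K) :
    vlam d p lam n = ∏ j ∈ Finset.Ioc 0 K, iota d p lam j ^ digit d n j := by
  have hsupp : (Function.mulSupport fun r => iota d p lam (r + 1) ^ digit d n (r + 1))
      ⊆ ↑(Finset.range K) := by
    intro r hr
    simp only [Finset.coe_range, Set.mem_Iio]
    by_contra h
    push_neg at h
    apply hr
    have hlt : n < q d r := lt_of_lt_of_le hK ((q_strictMono hd0 hd).monotone h)
    show iota d p lam (r + 1) ^ digit d n (r + 1) = 1
    have : digit d n (r + 1) = 0 := digit_high hd0 hd (by simpa using hlt)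
    rw [this, pow_zero]
  rw [vlam, finprod_eq_prod_of_mulSupport_subset _ hsupp]
  have : Finset.Ioc 0 K = Finset.Ico 1 (K + 1) := rfl
  rw [this, Finset.prod_Ico_eq_prod_range]
  simp [add_comm]

include hd0 hd hp in
lemma vlam_rec (n : ℕ) :
    (∏ j ∈ Finset.Icc 1 (zeta d n), (p j : ℂ)) * vlam d p lam (n + 1)
      + ∑ r ∈ Finset.range (zeta d n), (1 - (p (r + 1) : ℂ)) * (∏ j ∈ Finset.Icc 1 r, (p j : ℂ))
          * vlam d p lam (n - (q d r - 1))
    = lam * vlam d p lam n := by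
  obtain ⟨m, hm⟩ : ∃ m, zeta d n = m := ⟨_, rfl⟩
  have hm1 : 1 ≤ m := hm ▸ zeta_pos hd0 hd n
  rw [hm]
  have dss : digit d (n + 1) m = digit d n m + 1 := by
    have := digit_succ_self (n := n) hd0 hd; rwa [hm] at this
  have dsl : ∀ j, 1 ≤ j → j < m → digit d (n + 1) j = 0 := fun j h1 h2 =>
    digit_succ_lt hd0 hd h1 (hm ▸ h2)
  have dsg : ∀ j, m < j → digit d (n + 1) j = digit d n j := fun j h =>
    digit_succ_gt hd0 hd (hm ▸ h)
  have dlt : ∀ j, 1 ≤ j → j < m → digit d n j = d j - 1 := fun j h1 h2 =>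
    digit_of_lt_zeta h1 (hm ▸ h2)
  have dsubl : ∀ r j, 1 ≤ j → j ≤ r → r < m → digit d (n - (q d r - 1)) j = 0 :=
    fun r j h1 h2 h3 => digit_sub_le hd0 hd h1 h2 (hm ▸ h3)
  have dsubg : ∀ r j, r < j → r < m → digit d (n - (q d r - 1)) j = digit d n j :=
    fun r j h1 h2 => digit_sub_gt hd0 hd h1 (hm ▸ h2)
  have hmod : n % q d (m - 1) = q d (m - 1) - 1 :=
    mod_of_lt_zeta hd0 hd (show m - 1 < zeta d n by omega)
  set K := n + 1 with hKdef
  have hnK : n < q d K := by have := le_q hd0 hd K; omega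
  have hn1K : n + 1 < q d K := by have := le_q hd0 hd K; omega
  have hmK : m ≤ K := by
    have h1 := le_q hd0 hd (m - 1)
    have h2 : n % q d (m - 1) ≤ n := Nat.mod_le _ _
    omega
  -- Claim A
  have hA : vlam d p lam (n + 1) = iota d p lam m ^ (digit d n m + 1)
      * ∏ j ∈ Finset.Ioc m K, iota d p lam j ^ digit d n j := by
    rw [vlam_eq hd0 hd hn1K, ← Finset.prod_Ioc_consecutive _ (Nat.zero_le m) hmK]
    congr 1
    · rw [Finset.prod_eq_single_of_mem m (by simp; omega) ?side, dss]
      case side =>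
        intro j hj hne
        have hj' := Finset.mem_Ioc.mp hj
        rw [dsl j (by omega) (by omega), pow_zero]
    · refine Finset.prod_congr rfl fun j hj => ?_
      have hj' := Finset.mem_Ioc.mp hj
      rw [dsg j (by omega)]
  -- Claim B
  have hB : vlam d p lam n
      = ((∏ j ∈ Finset.Ioc 0 (m - 1), iota d p lam j ^ (d j - 1)) * iota d p lam m ^ digit d n m)
        * ∏ j ∈ Finset.Ioc m K, iota d p lam j ^ digit d n j := by
    rw [vlam_eq hd0 hd hnK, ← Finset.prod_Ioc_consecutive _ (Nat.zero_le m) hmK]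
    congr 1
    rw [prod_Ioc_split_top _ (show 0 < m by omega)]
    congr 1
    refine Finset.prod_congr rfl fun j hj => ?_
    have hj' := Finset.mem_Ioc.mp hj
    rw [dlt j (by omega) (by omega)]
  -- Claim C
  have hC : ∀ r ∈ Finset.range m, vlam d p lam (n - (q d r - 1))
      = ((∏ j ∈ Finset.Ioc r (m - 1), iota d p lam j ^ (d j - 1)) * iota d p lam m ^ digit d n m)
        * ∏ j ∈ Finset.Ioc m K, iota d p lam j ^ digit d n j := by
    intro r hr
    have hrm : r < m := Finset.mem_range.mp hr
    have hsub : n - (q d r - 1) ≤ n := Nat.sub_le _ _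
    rw [vlam_eq hd0 hd (lt_of_le_of_lt hsub hnK),
      ← Finset.prod_Ioc_consecutive _ (Nat.zero_le m) hmK,
      ← Finset.prod_Ioc_consecutive _ (Nat.zero_le r) (le_of_lt hrm)]
    have e1 : ∏ j ∈ Finset.Ioc 0 r, iota d p lam j ^ digit d (n - (q d r - 1)) j = 1 := by
      refine Finset.prod_eq_one fun j hj => ?_
      have hj' := Finset.mem_Ioc.mp hj
      rw [dsubl r j (by omega) (by omega) hrm, pow_zero]
    have e2 : ∏ j ∈ Finset.Ioc r m, iota d p lam j ^ digit d (n - (q d r - 1)) j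
        = (∏ j ∈ Finset.Ioc r (m - 1), iota d p lam j ^ (d j - 1))
          * iota d p lam m ^ digit d n m := by
      rw [prod_Ioc_split_top _ hrm]
      congr 1
      · refine Finset.prod_congr rfl fun j hj => ?_
        have hj' := Finset.mem_Ioc.mp hj
        rw [dsubg r j (by omega) hrm, dlt j (by omega) (by omega)]
      · rw [dsubg r m hrm hrm]
    have e3 : ∏ j ∈ Finset.Ioc m K, iota d p lam j ^ digit d (n - (q d r - 1)) j
        = ∏ j ∈ Finset.Ioc m K, iota d p lam j ^ digit d n j := by
      refine Finset.prod_congr rfl fun j hj => ?_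
      have hj' := Finset.mem_Ioc.mp hj
      rw [dsubg r j (by omega) hrm]
    rw [e1, e2, e3, one_mul]
  -- use star
  have hstar := star (d := d) (p := p) (lam := lam) hd hp (m - 1)
  rw [show m - 1 + 1 = m by omega] at hstar
  rw [hA, hB]
  have hsum : ∑ r ∈ Finset.range m, (1 - (p (r + 1) : ℂ)) * (∏ j ∈ Finset.Icc 1 r, (p j : ℂ))
        * vlam d p lam (n - (q d r - 1))
      = (∑ r ∈ Finset.range m, (1 - (p (r + 1) : ℂ)) * (∏ j ∈ Finset.Icc 1 r, (p j : ℂ))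
          * ∏ j ∈ Finset.Ioc r (m - 1), iota d p lam j ^ (d j - 1))
        * (iota d p lam m ^ digit d n m
          * ∏ j ∈ Finset.Ioc m K, iota d p lam j ^ digit d n j) := by
    rw [Finset.sum_mul]
    refine Finset.sum_congr rfl fun r hr => ?_
    rw [hC r hr]
    ring
  rw [hsum]
  linear_combination hstar * (iota d p lam m ^ digit d n m
    * ∏ j ∈ Finset.Ioc m K, iota d p lam j ^ digit d n j)

end vlam_sec


section ssec
variable {d : ℕ → ℕ} {p : ℕ → ℝ}
variable (hd0 : d 0 = 1) (hd : ∀ j, 1 ≤ j → 2 ≤ d j)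
include hd0 hd

lemma sum_geom (r : ℕ) : ∑ j ∈ Finset.Icc 1 r, (d j - 1) * q d (j - 1) = q d r - 1 := by
  induction r with
  | zero => simp [q_zero hd0 hd]
  | succ r ih =>
    rw [Finset.sum_Icc_succ_top (by omega), ih, Nat.add_sub_cancel, q_succ, Nat.sub_mul]
    have h2 := hd (r + 1) (by omega)
    have hq := q_pos hd0 hd r
    have hle : q d r ≤ d (r + 1) * q d r := Nat.le_mul_of_pos_left _ (by omega)
    have hcomm : q d r * d (r + 1) = d (r + 1) * q d r := mul_comm _ _
    omega

omit hd0 hd in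
lemma s_succ (n : ℕ) : s d p n (n + 1) = ∏ j ∈ Finset.Icc 1 (zeta d n), p j := by
  rw [s, if_pos rfl]

omit hd0 hd in
lemma s_self (n : ℕ) : s d p n n = 1 - p 1 := by
  rw [s, if_neg (by omega), if_pos rfl]

lemma s_sub {n r : ℕ} (hr : 1 ≤ r) (hrz : r + 1 ≤ zeta d n) :
    s d p n (n - (q d r - 1)) = (1 - p (r + 1)) * ∏ j ∈ Finset.Icc 1 r, p j := by
  have hmod : n % q d r = q d r - 1 := mod_of_lt_zeta hd0 hd (by omega)
  have hle : q d r - 1 ≤ n := hmod ▸ Nat.mod_le n _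
  have h2 : 2 ≤ q d r := two_le_q hd0 hd hr
  have hex : ∃ r', 1 ≤ r' ∧ r' + 1 ≤ zeta d n ∧
      n = (n - (q d r - 1)) + ∑ j ∈ Finset.Icc 1 r', (d j - 1) * q d (j - 1) :=
    ⟨r, hr, hrz, by rw [sum_geom hd0 hd]; omega⟩
  rw [s, if_neg (by omega), if_neg (by omega), dif_pos hex]
  obtain ⟨h1', h2', h3'⟩ := hex.choose_spec
  rw [sum_geom hd0 hd] at h3'
  have hq : q d hex.choose = q d r := by
    have := q_pos hd0 hd hex.choose
    have := q_pos hd0 hd r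
    omega
  have hcr : hex.choose = r := (q_strictMono hd0 hd).injective hq
  rw [hcr]

lemma s_eq_zero {n m' : ℕ} (h1 : m' ≠ n + 1)
    (h2 : ∀ r, r < zeta d n → m' ≠ n - (q d r - 1)) : s d p n m' = 0 := by
  have hz := zeta_pos hd0 hd n
  have hm'n : m' ≠ n := by
    have := h2 0 (by omega)
    rwa [q_zero hd0 hd, Nat.sub_self, Nat.sub_zero] at this
  rw [s, if_neg h1, if_neg hm'n, dif_neg]
  rintro ⟨r, hr1, hr2, hr3⟩
  rw [sum_geom hd0 hd] at hr3
  have h2q : 2 ≤ q d r := two_le_q hd0 hd hr1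
  exact h2 r (by omega) (by omega)

lemma eig_expand (v : ℕ → ℂ) (n : ℕ) :
    ∑' m', (s d p n m' : ℂ) * v m'
    = (∏ j ∈ Finset.Icc 1 (zeta d n), (p j : ℂ)) * v (n + 1)
      + ∑ r ∈ Finset.range (zeta d n), (1 - (p (r + 1) : ℂ))
          * (∏ j ∈ Finset.Icc 1 r, (p j : ℂ)) * v (n - (q d r - 1)) := by
  classical
  set F : Finset ℕ :=
    insert (n + 1) ((Finset.range (zeta d n)).image fun r => n - (q d r - 1)) with hF
  have hzero : ∀ m', m' ∉ F → (s d p n m' : ℂ) * v m' = 0 := by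
    intro m' hm'
    simp only [hF, Finset.mem_insert, Finset.mem_image, Finset.mem_range, not_or,
      not_exists] at hm'
    push_neg at hm'
    obtain ⟨h1, h2⟩ := hm'
    rw [s_eq_zero hd0 hd h1 (fun r hr heq => h2 r hr heq.symm)]
    simp
  rw [tsum_eq_sum (s := F) hzero, hF, Finset.sum_insert ?notmem]
  case notmem =>
    simp only [Finset.mem_image, Finset.mem_range]
    rintro ⟨r, hr, heq⟩
    omega
  congr 1
  · rw [s_succ]
    push_cast
    ring
  · rw [Finset.sum_image ?inj]
    · refine Finset.sum_congr rfl fun r hr => ?_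
      have hrz : r < zeta d n := Finset.mem_range.mp hr
      rcases Nat.eq_zero_or_pos r with rfl | hrpos
      · rw [q_zero hd0 hd, Nat.sub_self, Nat.sub_zero, s_self]
        simp
      · rw [s_sub hd0 hd hrpos (by omega)]
        push_cast
        ring
    case inj =>
      intro r1 h1 r2 h2 heq
      have hz1 : r1 < zeta d n := Finset.mem_range.mp h1
      have hz2 : r2 < zeta d n := Finset.mem_range.mp h2
      have hle1 : q d r1 - 1 ≤ n := (mod_of_lt_zeta hd0 hd hz1) ▸ Nat.mod_le n _
      have hle2 : q d r2 - 1 ≤ n := (mod_of_lt_zeta hd0 hd hz2) ▸ Nat.mod_le n _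
      have hq1 := q_pos hd0 hd r1
      have hq2 := q_pos hd0 hd r2
      exact (q_strictMono hd0 hd).injective (show q d r1 = q d r2 by dsimp only at heq; omega)

end ssec

section master
variable {d : ℕ → ℕ} {p : ℕ → ℝ} {lam : ℂ}
variable (hd0 : d 0 = 1) (hd : ∀ j, 1 ≤ j → 2 ≤ d j)
variable (hp : ∀ j, 1 ≤ j → p j ∈ Set.Ioc (0 : ℝ) 1)

include hd0 hd in
lemma vlam_zero : vlam d p lam 0 = 1 := by
  rw [vlam_eq hd0 hd (show (0 : ℕ) < q d 0 by rw [q_zero hd0 hd]; omega)]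
  simp

include hd0 hd in
lemma vlam_q (r : ℕ) : vlam d p lam (q d r) = iota d p lam (r + 1) := by
  rw [vlam_eq hd0 hd (q_strictMono hd0 hd (Nat.lt_succ_self r))]
  rw [Finset.prod_eq_single_of_mem (r + 1) (by simp) ?side]
  · rw [digit_q_self hd0 hd, pow_one]
  case side =>
    intro j hj hne
    have hj' := Finset.mem_Ioc.mp hj
    rw [digit_q_low hd0 hd (by omega) (by omega), pow_zero]

include hp in
lemma Pp_ne (k : ℕ) : (∏ j ∈ Finset.Icc 1 k, (p j : ℂ)) ≠ 0 :=
  Finset.prod_ne_zero_iff.mpr fun j hj => pc_ne hp (Finset.mem_Icc.mp hj).1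

include hd0 hd hp in
lemma eigen_zero (hp1 : ¬ Filter.Tendsto (fun j => p j) Filter.atTop (nhds (1 : ℝ)))
    (lam : ℂ) (v : ℕ → ℂ)
    (heig : ∀ n, ∑' m', (s d p n m' : ℂ) * v m' = lam * v n)
    (hv0 : Tendsto v atTop (𝓝 0)) : v = 0 := by
  have hform : ∀ n, v n = v 0 * vlam d p lam n := by
    intro n
    induction n using Nat.strong_induction_on with
    | _ n ih =>
      match n with
      | 0 => rw [vlam_zero hd0 hd, mul_one]
      | Nat.succ k =>
        have he := heig k
        rw [eig_expand hd0 hd v k] at he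
        have hrec := vlam_rec (lam := lam) hd0 hd hp k
        have hihk : v k = v 0 * vlam d p lam k := ih k (by omega)
        have hsum_eq : ∑ r ∈ Finset.range (zeta d k),
              (1 - (p (r + 1) : ℂ)) * (∏ j ∈ Finset.Icc 1 r, (p j : ℂ)) * v (k - (q d r - 1))
            = v 0 * ∑ r ∈ Finset.range (zeta d k),
              (1 - (p (r + 1) : ℂ)) * (∏ j ∈ Finset.Icc 1 r, (p j : ℂ))
                * vlam d p lam (k - (q d r - 1)) := by
          rw [Finset.mul_sum]
          refine Finset.sum_congr rfl fun r hr => ?_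
          have hle : k - (q d r - 1) ≤ k := Nat.sub_le _ _
          rw [ih _ (by omega)]
          ring
        have hPp := Pp_ne (p := p) hp (zeta d k)
        have hmain : (∏ j ∈ Finset.Icc 1 (zeta d k), (p j : ℂ)) * v (k + 1)
            = (∏ j ∈ Finset.Icc 1 (zeta d k), (p j : ℂ)) * (v 0 * vlam d p lam (k + 1)) := by
          linear_combination he - hsum_eq - v 0 * hrec + lam * hihk
        exact mul_left_cancel₀ hPp hmain
  by_contra hvne
  have hv00 : v 0 ≠ 0 := by
    intro h0
    apply hvne
    funext n
    rw [hform n, h0, zero_mul]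
    rfl
  have hq_tend : Tendsto (fun r => q d r) atTop atTop := (q_strictMono hd0 hd).tendsto_atTop
  have h1 : Tendsto (fun r => v (q d r)) atTop (𝓝 0) := hv0.comp hq_tend
  have h2 : ∀ r, v (q d r) = v 0 * iota d p lam (r + 1) := fun r => by
    rw [hform, vlam_q hd0 hd]
  have hiota : Tendsto (fun r => iota d p lam (r + 1)) atTop (𝓝 0) := by
    have h3 := h1.const_mul (v 0)⁻¹
    simp only [h2, mul_zero] at h3
    have : ∀ r, (v 0)⁻¹ * (v 0 * iota d p lam (r + 1)) = iota d p lam (r + 1) := fun r =>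
      inv_mul_cancel_left₀ hv00 _
    simpa [this] using h3
  have hnorm : Tendsto (fun r => ‖iota d p lam (r + 1)‖) atTop (𝓝 0) :=
    tendsto_zero_iff_norm_tendsto_zero.mp hiota
  have hftil : Tendsto (fun r => ‖ftil d p (r + 1) lam‖) atTop (𝓝 0) := by
    have hev : ∀ᶠ r in atTop, ‖ftil d p (r + 1) lam‖ ≤ ‖iota d p lam (r + 1)‖ := by
      filter_upwards [hnorm.eventually_lt_const (show (0:ℝ) < 1 by norm_num)] with r hb
      rw [ftil_succ, norm_pow]
      exact pow_le_of_le_one (norm_nonneg _) hb.le (by have := hd (r + 1) (by omega); omega)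
    exact squeeze_zero' (Eventually.of_forall fun r => norm_nonneg _) hev hnorm
  have hftil' : Tendsto (fun r => ftil d p (r + 1) lam) atTop (𝓝 0) :=
    tendsto_zero_iff_norm_tendsto_zero.mpr hftil
  have hiota2 : Tendsto (fun r => iota d p lam (r + 2)) atTop (𝓝 0) := by
    have h4 := hiota.comp (tendsto_add_atTop_nat 1)
    simpa [Function.comp_def, add_assoc] using h4
  have hmul : Tendsto (fun r => (p (r + 2) : ℂ) * iota d p lam (r + 2)) atTop (𝓝 0) := by
    rw [tendsto_zero_iff_norm_tendsto_zero]
    apply squeeze_zero (fun r => norm_nonneg _)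
      (g := fun r => ‖iota d p lam (r + 2)‖)
    · intro r
      rw [norm_mul]
      have hple : ‖((p (r + 2) : ℝ) : ℂ)‖ ≤ 1 := by
        rw [Complex.norm_real, Real.norm_eq_abs]
        have := hp (r + 2) (by omega)
        rw [abs_of_pos this.1]
        exact this.2
      calc ‖((p (r + 2) : ℝ) : ℂ)‖ * ‖iota d p lam (r + 2)‖
          ≤ 1 * ‖iota d p lam (r + 2)‖ := by
            exact mul_le_mul_of_nonneg_right hple (norm_nonneg _)
        _ = ‖iota d p lam (r + 2)‖ := one_mul _
    · exact tendsto_zero_iff_norm_tendsto_zero.mp hiota2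
  have hterm : ∀ r : ℕ, (1 : ℂ) - (p (r + 2) : ℂ)
      = ftil d p (r + 1) lam - (p (r + 2) : ℂ) * iota d p lam (r + 2) := by
    intro r
    have h5 := iota_mul (d := d) (lam := lam) hp (show 1 ≤ r + 2 by omega)
    rw [show r + 2 - 1 = r + 1 from rfl] at h5
    linear_combination h5
  have hsub : Tendsto (fun r => (1 : ℂ) - (p (r + 2) : ℂ)) atTop (𝓝 0) := by
    simp only [hterm]
    simpa using hftil'.sub hmul
  have hp1c : Tendsto (fun r => ((p (r + 2) : ℝ) : ℂ)) atTop (𝓝 1) := by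
    have h6 := (tendsto_const_nhds (x := (1 : ℂ)) (f := atTop)).sub hsub
    simpa using h6
  have hp1r : Tendsto (fun r => p (r + 2)) atTop (𝓝 1) := by
    have h7 := (Complex.continuous_re.tendsto 1).comp hp1c
    simpa [Function.comp_def] using h7
  exact hp1 ((tendsto_add_atTop_iff_nat 2).mp hp1r)

end master


/-- The point spectrum of a continuous linear operator. -/
def pointSpectrum {M : Type*} [NormedAddCommGroup M] [NormedSpace ℂ M]
    (T : M →L[ℂ] M) : Set ℂ :=
  {lam | ∃ v, v ≠ 0 ∧ T v = lam • v}

/-- The residual spectrum: `T - λI` is injective but its range is not dense. -/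
def residualSpectrum {M : Type*} [NormedAddCommGroup M] [NormedSpace ℂ M]
    (T : M →L[ℂ] M) : Set ℂ :=
  {lam | Function.Injective ⇑(T - lam • (1 : M →L[ℂ] M)) ∧
    ¬ DenseRange ⇑(T - lam • (1 : M →L[ℂ] M))}

/-- The continuous spectrum: `T - λI` is injective with dense range, but not surjective. -/
def continuousSpectrum {M : Type*} [NormedAddCommGroup M] [NormedSpace ℂ M]
    (T : M →L[ℂ] M) : Set ℂ :=
  {lam | Function.Injective ⇑(T - lam • (1 : M →L[ℂ] M)) ∧
    DenseRange ⇑(T - lam • (1 : M →L[ℂ] M)) ∧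
    Set.range ⇑(T - lam • (1 : M →L[ℂ] M)) ≠ Set.univ}

/-- if `(p_j)` does not converge to `1`, then `S` has no eigenvalues
on `c₀` nor on `l^α` for `1 ≤ α < ∞`. -/
theorem stmt11 (d : ℕ → ℕ) (p : ℕ → ℝ)
    (hd0 : d 0 = 1) (hd : ∀ j, 1 ≤ j → 2 ≤ d j)
    (hp : ∀ j, 1 ≤ j → p j ∈ Set.Ioc (0 : ℝ) 1)
    (hp1 : ¬ Filter.Tendsto (fun j => p j) Filter.atTop (nhds (1 : ℝ)))
    (α : ℝ≥0∞) [Fact (1 ≤ α)] (hα : α ≠ ⊤)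
    (T0 : C₀(ℕ, ℂ) →L[ℂ] C₀(ℕ, ℂ))
    (hT0 : ∀ (w : C₀(ℕ, ℂ)) (n : ℕ), T0 w n = ∑' m : ℕ, (s d p n m : ℂ) * w m)
    (Ta : lp (fun _ : ℕ => ℂ) α →L[ℂ] lp (fun _ : ℕ => ℂ) α)
    (hTa : ∀ (w : lp (fun _ : ℕ => ℂ) α) (n : ℕ),
      Ta w n = ∑' m : ℕ, (s d p n m : ℂ) * w m) :
    (¬ ∃ (lam : ℂ) (v : C₀(ℕ, ℂ)), v ≠ 0 ∧ T0 v = lam • v) ∧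
      ¬ ∃ (lam : ℂ) (v : lp (fun _ : ℕ => ℂ) α), v ≠ 0 ∧ Ta v = lam • v := by
  constructor
  · rintro ⟨lam, v, hvne, heq⟩
    have hcoe : (⇑v : ℕ → ℂ) = 0 := by
      apply eigen_zero hd0 hd hp hp1 lam
      · intro n
        rw [← hT0 v n, heq]
        simp
      · have h := zero_at_infty (v : C₀(ℕ, ℂ))
        rwa [cocompact_eq_atTop (α := ℕ)] at h
    exact hvne (DFunLike.ext _ _ fun n => congrFun hcoe n)
  · rintro ⟨lam, v, hvne, heq⟩
    have hcoe : (⇑v : ℕ → ℂ) = 0 := by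
      apply eigen_zero hd0 hd hp hp1 lam
      · intro n
        rw [← hTa v n, heq, lp.coeFn_smul, Pi.smul_apply, smul_eq_mul]
      · have hmem := lp.memℓp v
        have h1α : (1 : ℝ≥0∞) ≤ α := Fact.out
        have hpt : 0 < α.toReal := ENNReal.toReal_pos (by intro h0; rw [h0] at h1α; simp at h1α) hα
        have hterm := (hmem.summable hpt).tendsto_atTop_zero
        rw [tendsto_zero_iff_norm_tendsto_zero]
        have h8 : ∀ n : ℕ, ‖v n‖ = (‖v n‖ ^ α.toReal) ^ (α.toReal)⁻¹ := fun n => by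
          rw [← Real.rpow_mul (norm_nonneg _), mul_inv_cancel₀ hpt.ne', Real.rpow_one]
        have h9 := hterm.rpow_const (p := (α.toReal)⁻¹) (Or.inr (by positivity))
        rw [Real.zero_rpow (inv_ne_zero hpt.ne')] at h9
        exact h9.congr fun n => (h8 n).symm
    exact hvne (lp.ext hcoe)


end AMFC
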